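/- The 3×6 real matrix V = [[1,0,0,1,1,0],[0,1,0,−1,0,1],[0,0,1,0,−1,−1]] has columns that do conjugate phase retrieval on ℂ³: if x, y ∈ ℂ³ satisfy |⟨x, vⱼ⟩| = |⟨y, vⱼ⟩| for all six columns vⱼ, then x = e^{iθ}y or x = e^{iθ}·conj(y) for some θ ∈ ℝ. -/

import Mathlib

noncomputable section
open MeasureTheory Complex Filter Topology

/-- `f` has exponential type at most `γ`. -/
def ExpType (γ : ℝ) (f : ℂ → ℂ) : Prop :=
  ∀ ε > 0, ∃ C > 0, ∀ z : ℂ, ‖f z‖ ≤ C * Real.exp ((γ + ε) * ‖z‖)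

/-- The Paley-Wiener space `PW_γ`: entire functions of exponential type at most `γ`
whose restriction to the real line is square integrable. -/
def IsPW (γ : ℝ) (f : ℂ → ℂ) : Prop :=
  Differentiable ℂ f ∧ ExpType γ f ∧ Integrable (fun x : ℝ => ‖f x‖ ^ 2)

/-- `f^♯(z) = conj (f (conj z))`. -/
def sharp (f : ℂ → ℂ) : ℂ → ℂ := fun z => (starRingEnd ℂ) (f ((starRingEnd ℂ) z))

/-- The (lower) Beurling density of `X` is strictly greater than `c`. -/
def hasDensityGT (X : Set ℝ) (c : ℝ) : Prop :=
  ∃ d : ℝ, c < d ∧ ∃ H : ℝ, ∀ h ≥ H, ∀ x : ℝ, d * h ≤ ((X ∩ Set.Icc x (x + h)).ncard : ℝ)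

/-- `t` is a set of sampling for `PW_γ`: frame inequalities hold. -/
def IsSamplingSet (γ : ℝ) (t : ℤ → ℝ) : Prop :=
  ∃ A B : ℝ, 0 < A ∧ 0 < B ∧ ∀ f : ℂ → ℂ, IsPW γ f →
    (A * ∫ x : ℝ, ‖f x‖ ^ 2 ≤ ∑' n : ℤ, ‖f (t n)‖ ^ 2) ∧
    (∑' n : ℤ, ‖f (t n)‖ ^ 2 ≤ B * ∫ x : ℝ, ‖f x‖ ^ 2)

/-- The columns of the matrix `V` from Equation (10) of the paper, as vectors in `ℂ³`. -/
def Vcols : Fin 6 → Fin 3 → ℂ :=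
  ![![1, 0, 0], ![0, 1, 0], ![0, 0, 1], ![1, -1, 0], ![1, 0, -1], ![0, 1, -1]]

local notation "conj" => (starRingEnd ℂ)

lemma pair_eq (a b c d : ℂ) (ha : ‖a‖ = ‖c‖) (hb : ‖b‖ = ‖d‖) (hab : ‖a - b‖ = ‖c - d‖) :
    a * conj b = c * conj d ∨ a * conj b = conj (c * conj d) := by
  have ns : ∀ p q : ℂ, ‖p‖ = ‖q‖ → Complex.normSq p = Complex.normSq q := by
    intro p q hpq
    rw [← Complex.sq_norm, ← Complex.sq_norm, hpq]
  have ha' := ns _ _ ha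
  have hb' := ns _ _ hb
  have hab' := ns _ _ hab
  rw [Complex.normSq_sub, Complex.normSq_sub] at hab'
  have hre : (a * conj b).re = (c * conj d).re := by linarith
  have habs : ‖a * conj b‖ = ‖c * conj d‖ := by
    rw [norm_mul, norm_mul, RCLike.norm_conj, RCLike.norm_conj,
      ha, hb]
  have h1 := Complex.sq_norm (a * conj b)
  have h2 := Complex.sq_norm (c * conj d)
  rw [Complex.normSq_apply] at h1 h2
  have habs2 : ‖a * conj b‖ ^ 2 = ‖c * conj d‖ ^ 2 := by rw [habs]
  have hre2 : (a * conj b).re * (a * conj b).re = (c * conj d).re * (c * conj d).re := by rw [hre]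
  have him : (a * conj b).im ^ 2 = (c * conj d).im ^ 2 := by rw [pow_two, pow_two]; linarith
  rcases sq_eq_sq_iff_eq_or_eq_neg.mp him with h' | h'
  · left; exact Complex.ext hre h'
  · right
    apply Complex.ext <;> simp [hre, h'] <;> ring

lemma pair_symm (a b c d : ℂ)
    (P : a * conj b = c * conj d ∨ a * conj b = conj (c * conj d)) :
    b * conj a = d * conj c ∨ b * conj a = conj (d * conj c) := by
  rcases P with h | h
  · left
    have := congrArg conj h
    simp only [map_mul, Complex.conj_conj] at this
    linear_combination this
  · right
    have := congrArg conj h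
    simp only [map_mul, Complex.conj_conj] at this ⊢
    linear_combination this

lemma mix (a0 b0 A B C D : ℂ)
    (hns : a0 * conj a0 = b0 * conj b0) (hb0 : b0 ≠ 0)
    (e1 : A * b0 = a0 * B) (e2 : C * conj b0 = a0 * conj D)
    (p : A * conj C = B * conj D ∨ A * conj C = conj B * D) :
    (C * b0 = a0 * D) ∨ (A * conj b0 = a0 * conj B) := by
  have hcb0 : conj b0 ≠ 0 := by simpa using hb0
  by_cases hD : D = 0
  · left
    have hC : C = 0 := by
      have : C * conj b0 = 0 := by rw [e2, hD]; simp
      exact (mul_eq_zero.mp this).resolve_right hcb0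
    rw [hC, hD]; ring
  by_cases hB : B = 0
  · right
    have hA : A = 0 := by
      have : A * b0 = 0 := by rw [e1, hB]; simp
      exact (mul_eq_zero.mp this).resolve_right hb0
    rw [hA, hB]; simp
  have ce2 : conj C * b0 = conj a0 * D := by
    have := congrArg conj e2
    simp only [map_mul, Complex.conj_conj] at this
    linear_combination this
  rcases p with h12 | h12
  · -- derive b0 * conj D = conj b0 * D
    have H : (b0 * B) * (b0 * conj D) = (b0 * B) * (conj b0 * D) := by
      linear_combination (-(b0^2)) * h12 + (conj C * b0) * e1 + (a0 * B) * ce2 + (B * D) * hns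
    have hk := mul_left_cancel₀ (mul_ne_zero hb0 hB) H
    left
    apply mul_left_cancel₀ hcb0
    linear_combination b0 * e2 + a0 * hk
  · -- derive b0 * conj B = conj b0 * B
    have H : (b0 * D) * (b0 * conj B) = (b0 * D) * (conj b0 * B) := by
      linear_combination (-(b0^2)) * h12 + (conj C * b0) * e1 + (a0 * B) * ce2 + (B * D) * hns
    have hk := mul_left_cancel₀ (mul_ne_zero hb0 hD) H
    right
    apply mul_left_cancel₀ hb0
    linear_combination conj b0 * e1 - a0 * hk

lemma key (a0 a1 a2 b0 b1 b2 : ℂ)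
    (h0 : ‖a0‖ = ‖b0‖)
    (p01 : a0 * conj a1 = b0 * conj b1 ∨ a0 * conj a1 = conj (b0 * conj b1))
    (p02 : a0 * conj a2 = b0 * conj b2 ∨ a0 * conj a2 = conj (b0 * conj b2))
    (p12 : a1 * conj a2 = b1 * conj b2 ∨ a1 * conj a2 = conj (b1 * conj b2))
    (hb0 : b0 ≠ 0) :
    ∃ u : ℂ, ‖u‖ = 1 ∧
      ((a0 = u * b0 ∧ a1 = u * b1 ∧ a2 = u * b2) ∨
       (a0 = u * conj b0 ∧ a1 = u * conj b1 ∧ a2 = u * conj b2)) := by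
  simp only [map_mul, Complex.conj_conj] at p01 p02 p12
  have hcb0 : conj b0 ≠ 0 := by simpa using hb0
  have hns : a0 * conj a0 = b0 * conj b0 := by
    rw [Complex.mul_conj, Complex.mul_conj]
    norm_cast
    rw [← Complex.sq_norm, ← Complex.sq_norm, h0]
  have ha0 : a0 ≠ 0 := by
    intro hz
    rw [hz] at hns
    simp only [zero_mul] at hns
    exact (mul_ne_zero hb0 hcb0) hns.symm
  have hca0 : conj a0 ≠ 0 := by simpa using ha0
  -- cross-multiplied dichotomy for each index
  have step : ∀ ai bi : ℂ,
      (a0 * conj ai = b0 * conj bi ∨ a0 * conj ai = conj b0 * bi) →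
      (ai * b0 = a0 * bi ∨ ai * conj b0 = a0 * conj bi) := by
    intro ai bi hp
    rcases hp with hp | hp
    · left
      have hc := congrArg conj hp
      simp only [map_mul, Complex.conj_conj] at hc
      apply mul_left_cancel₀ hca0
      linear_combination b0 * hc - bi * hns
    · right
      have hc := congrArg conj hp
      simp only [map_mul, Complex.conj_conj] at hc
      apply mul_left_cancel₀ hca0
      linear_combination conj b0 * hc - conj bi * hns
  have c1 := step a1 b1 p01
  have c2 := step a2 b2 p02
  -- assemble
  have left_case : a1 * b0 = a0 * b1 → a2 * b0 = a0 * b2 → ∃ u : ℂ, ‖u‖ = 1 ∧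
      ((a0 = u * b0 ∧ a1 = u * b1 ∧ a2 = u * b2) ∨
       (a0 = u * conj b0 ∧ a1 = u * conj b1 ∧ a2 = u * conj b2)) := by
    intro e1 e2
    refine ⟨a0 / b0, ?_, Or.inl ⟨?_, ?_, ?_⟩⟩
    · rw [norm_div, h0, div_self (norm_ne_zero_iff.mpr hb0)]
    · rw [div_mul_cancel₀ _ hb0]
    · rw [div_mul_eq_mul_div, eq_div_iff hb0]; linear_combination e1
    · rw [div_mul_eq_mul_div, eq_div_iff hb0]; linear_combination e2
  have right_case : a1 * conj b0 = a0 * conj b1 → a2 * conj b0 = a0 * conj b2 → ∃ u : ℂ, ‖u‖ = 1 ∧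
      ((a0 = u * b0 ∧ a1 = u * b1 ∧ a2 = u * b2) ∨
       (a0 = u * conj b0 ∧ a1 = u * conj b1 ∧ a2 = u * conj b2)) := by
    intro e1 e2
    refine ⟨a0 / conj b0, ?_, Or.inr ⟨?_, ?_, ?_⟩⟩
    · rw [norm_div, RCLike.norm_conj, h0, div_self (norm_ne_zero_iff.mpr hb0)]
    · rw [div_mul_cancel₀ _ hcb0]
    · rw [div_mul_eq_mul_div, eq_div_iff hcb0]; linear_combination e1
    · rw [div_mul_eq_mul_div, eq_div_iff hcb0]; linear_combination e2
  rcases c1 with e1 | e1 <;> rcases c2 with e2 | e2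
  · exact left_case e1 e2
  · rcases mix a0 b0 a1 b1 a2 b2 hns hb0 e1 e2 p12 with h' | h'
    · exact left_case e1 h'
    · exact right_case h' e2
  · have p21 : a2 * conj a1 = b2 * conj b1 ∨ a2 * conj a1 = conj b2 * b1 := by
      rcases p12 with h' | h'
      · left
        have := congrArg conj h'
        simp only [map_mul, Complex.conj_conj] at this
        linear_combination this
      · right
        have := congrArg conj h'
        simp only [map_mul, Complex.conj_conj] at this
        linear_combination this
    rcases mix a0 b0 a2 b2 a1 b1 hns hb0 e2 e1 p21 with h' | h'
    · exact left_case h' e2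
    · exact right_case e1 h'
  · exact right_case e1 e2

theorem example_matrix_does_cpr (x y : Fin 3 → ℂ)
    (h : ∀ j : Fin 6, ‖∑ i : Fin 3, x i * Vcols j i‖ = ‖∑ i : Fin 3, y i * Vcols j i‖) :
    ∃ θ : ℝ, (∀ i, x i = Complex.exp (θ * Complex.I) * y i) ∨
      (∀ i, x i = Complex.exp (θ * Complex.I) * (starRingEnd ℂ) (y i)) := by
  have h0 : ‖x 0‖ = ‖y 0‖ := by simpa [Vcols, Fin.sum_univ_three] using h 0
  have h1 : ‖x 1‖ = ‖y 1‖ := by simpa [Vcols, Fin.sum_univ_three] using h 1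
  have h2 : ‖x 2‖ = ‖y 2‖ := by simpa [Vcols, Fin.sum_univ_three] using h 2
  have h3 : ‖x 0 - x 1‖ = ‖y 0 - y 1‖ := by
    simpa [show Vcols 3 = ![1, -1, 0] from rfl, Fin.sum_univ_three, sub_eq_add_neg] using h 3
  have h4 : ‖x 0 - x 2‖ = ‖y 0 - y 2‖ := by
    simpa [show Vcols 4 = ![1, 0, -1] from rfl, Fin.sum_univ_three, sub_eq_add_neg] using h 4
  have h5 : ‖x 1 - x 2‖ = ‖y 1 - y 2‖ := by
    simpa [show Vcols 5 = ![0, 1, -1] from rfl, Fin.sum_univ_three, sub_eq_add_neg] using h 5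
  have p01 := pair_eq (x 0) (x 1) (y 0) (y 1) h0 h1 h3
  have p02 := pair_eq (x 0) (x 2) (y 0) (y 2) h0 h2 h4
  have p12 := pair_eq (x 1) (x 2) (y 1) (y 2) h1 h2 h5
  -- helper to finish from a unimodular u
  have finish : ∀ u : ℂ, ‖u‖ = 1 →
      ((x 0 = u * y 0 ∧ x 1 = u * y 1 ∧ x 2 = u * y 2) ∨
       (x 0 = u * conj (y 0) ∧ x 1 = u * conj (y 1) ∧ x 2 = u * conj (y 2))) →
      ∃ θ : ℝ, (∀ i, x i = Complex.exp (θ * Complex.I) * y i) ∨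
        (∀ i, x i = Complex.exp (θ * Complex.I) * (starRingEnd ℂ) (y i)) := by
    intro u hu hc
    refine ⟨u.arg, ?_⟩
    have habs : (‖u‖ : ℂ) = 1 := by
      simp [hu]
    have hexp : Complex.exp (u.arg * Complex.I) = u := by
      have := Complex.norm_mul_exp_arg_mul_I u
      rwa [habs, one_mul] at this
    rcases hc with ⟨e0, e1, e2⟩ | ⟨e0, e1, e2⟩
    · left; intro i; fin_cases i <;> simp [hexp, e0, e1, e2]
    · right; intro i; fin_cases i <;> simp [hexp, e0, e1, e2]
  by_cases hy0 : y 0 ≠ 0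
  · rcases key (x 0) (x 1) (x 2) (y 0) (y 1) (y 2) h0 p01 p02 p12 hy0 with ⟨u, hu, hc⟩
    exact finish u hu hc
  push_neg at hy0
  by_cases hy1 : y 1 ≠ 0
  · rcases key (x 1) (x 0) (x 2) (y 1) (y 0) (y 2) h1
      (pair_symm _ _ _ _ p01) p12 p02 hy1 with ⟨u, hu, hc⟩
    refine finish u hu ?_
    rcases hc with ⟨e1, e0, e2⟩ | ⟨e1, e0, e2⟩
    · exact Or.inl ⟨e0, e1, e2⟩
    · exact Or.inr ⟨e0, e1, e2⟩
  push_neg at hy1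
  by_cases hy2 : y 2 ≠ 0
  · rcases key (x 2) (x 0) (x 1) (y 2) (y 0) (y 1) h2
      (pair_symm _ _ _ _ p02) (pair_symm _ _ _ _ p12) p01 hy2 with ⟨u, hu, hc⟩
    refine finish u hu ?_
    rcases hc with ⟨e2, e0, e1⟩ | ⟨e2, e0, e1⟩
    · exact Or.inl ⟨e0, e1, e2⟩
    · exact Or.inr ⟨e0, e1, e2⟩
  push_neg at hy2
  -- y = 0, hence x = 0
  refine finish 1 (by norm_num) (Or.inl ⟨?_, ?_, ?_⟩) <;>
    simp_all [norm_eq_zero, hy0, hy1, hy2]
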